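/- Let G be a connected graph and T ⊆ V(G) a subset of even cardinality. Then there exists a spanning subgraph H of G such that every vertex of T has odd degree in H, every vertex not in T has even degree in H, and H is a forest. Moreover, such an H can also be chosen so that its edge-complement G \ E(H) is a forest. -/

import Mathlib

open scoped symmDiff

lemma odd_iff_zmod' (n : ℕ) : Odd n ↔ (n : ZMod 2) = 1 := by
  rw [Nat.odd_iff, ← ZMod.natCast_mod n 2]
  rcases Nat.mod_two_eq_zero_or_one n with h | h <;> rw [h] <;> simp

lemma even_iff_zmod' (n : ℕ) : Even n ↔ (n : ZMod 2) = 0 := by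
  rw [Nat.even_iff, ← ZMod.natCast_mod n 2]
  rcases Nat.mod_two_eq_zero_or_one n with h | h <;> rw [h] <;> simp

lemma cast_card_symmDiff' {α : Type*} [DecidableEq α] (A B : Finset α) :
    (((A ∆ B).card : ZMod 2)) = A.card + B.card := by
  have h1 : (A ∆ B).card = (A \ B).card + (B \ A).card := by
    rw [symmDiff_def]
    exact Finset.card_union_of_disjoint (Finset.sdiff_disjoint.mono_right Finset.sdiff_subset)
  have h2 : (A \ B).card + (A ∩ B).card = A.card := Finset.card_sdiff_add_card_inter A B
  have h3 : (B \ A).card + (B ∩ A).card = B.card := Finset.card_sdiff_add_card_inter B A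
  have h4 : (A ∩ B) = (B ∩ A) := Finset.inter_comm A B
  have key : ((A ∆ B).card : ZMod 2) + 2 * (A ∩ B).card = A.card + B.card := by
    push_cast [h1, ← h2, ← h3, h4]; ring
  have h5 : (2 : ZMod 2) = 0 := by decide
  rw [h5, zero_mul, add_zero] at key
  exact key

lemma walk_parity' {V : Type*} [DecidableEq V] {G : SimpleGraph V} {u v : V}
    (p : G.Walk u v) (x : V) :
    (((p.edges.filter (fun e => x ∈ e)).length : ZMod 2)) =
      (if x = u then 1 else 0) + (if x = v then 1 else 0) := by
  induction p with
  | nil =>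
    simp only [SimpleGraph.Walk.edges_nil, List.filter_nil, List.length_nil, Nat.cast_zero]
    split_ifs <;> decide
  | cons h q ih =>
    rename_i a b c
    simp only [SimpleGraph.Walk.edges_cons, List.filter_cons]
    by_cases hx : x ∈ s(a, b)
    · simp only [hx, decide_true, if_true, List.length_cons]
      push_cast
      rw [ih]
      rcases Sym2.mem_iff.mp hx with h1 | h1 <;> subst h1 <;>
        simp [h.ne, h.ne'] <;> split_ifs <;> decide
    · simp only [hx, decide_false, Bool.false_eq_true, if_false]
      rw [ih]
      have hxa : ¬ x = a := fun hh => hx (by simp [hh])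
      have hxb : ¬ x = b := fun hh => hx (by simp [hh])
      simp [hxa, hxb]

lemma odd_iff_zmod (n : ℕ) : Odd n ↔ (n : ZMod 2) = 1 := by
  rw [Nat.odd_iff, ← ZMod.natCast_mod n 2]
  rcases Nat.mod_two_eq_zero_or_one n with h | h <;> rw [h] <;> simp

lemma even_iff_zmod (n : ℕ) : Even n ↔ (n : ZMod 2) = 0 := by
  rw [Nat.even_iff, ← ZMod.natCast_mod n 2]
  rcases Nat.mod_two_eq_zero_or_one n with h | h <;> rw [h] <;> simp

lemma acyclic_mono' {V : Type*} {H G : SimpleGraph V} (hle : H ≤ G) (hg : G.IsAcyclic) :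
    H.IsAcyclic := fun _ c hc =>
  hg (c.mapLe hle) ((SimpleGraph.Walk.mapLe_isCycle hle).mpr hc)

lemma exists_spanning_tree' {V : Type*} [Fintype V] (G : SimpleGraph V) (hG : G.Connected) :
    ∃ Gt, Gt ≤ G ∧ Gt.Connected ∧ Gt.IsAcyclic := by
  classical
  suffices h : ∀ n (H : SimpleGraph V), H.edgeSet.ncard = n → H.Connected →
      ∃ Gt, Gt ≤ H ∧ Gt.Connected ∧ Gt.IsAcyclic from h _ G rfl hG
  intro n
  induction n using Nat.strong_induction_on with
  | _ n ih =>
    intro H hn hH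
    by_cases hac : H.IsAcyclic
    · exact ⟨H, le_refl _, hH, hac⟩
    · rw [SimpleGraph.isAcyclic_iff_forall_adj_isBridge] at hac
      push_neg at hac
      obtain ⟨v, w, hadj, hbr⟩ := hac
      set H' := H \ SimpleGraph.fromEdgeSet {s(v, w)} with hH'
      have hle : H' ≤ H := sdiff_le
      have hrvw : H'.Reachable v w := by
        rw [SimpleGraph.isBridge_iff] at hbr
        push_neg at hbr
        exact hbr
      have hreach : ∀ {a b : V}, H.Walk a b → H'.Reachable a b := by
        intro a b p
        induction p with
        | nil => exact SimpleGraph.Reachable.refl _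
        | cons hadj2 q ihq =>
          rename_i a' b' c'
          refine SimpleGraph.Reachable.trans ?_ ihq
          by_cases he : s(a', b') = s(v, w)
          · rw [Sym2.eq_iff] at he
            rcases he with ⟨rfl, rfl⟩ | ⟨rfl, rfl⟩
            · exact hrvw
            · exact hrvw.symm
          · refine SimpleGraph.Adj.reachable ?_
            rw [hH', SimpleGraph.sdiff_adj]
            exact ⟨hadj2, by simp [SimpleGraph.fromEdgeSet_adj, he]⟩
      have hH'conn : H'.Connected := by
        rw [SimpleGraph.connected_iff]
        exact ⟨fun a b => hreach (hH.preconnected a b).some, hH.nonempty⟩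
      have hss : H'.edgeSet ⊂ H.edgeSet := by
        constructor
        · exact SimpleGraph.edgeSet_mono hle
        · intro hsub
          have h1 : s(v, w) ∈ H.edgeSet := H.mem_edgeSet.mpr hadj
          have h2 : ¬ H'.Adj v w := by
            simp [hH', SimpleGraph.sdiff_adj, SimpleGraph.fromEdgeSet_adj, hadj.ne]
          exact h2 (H'.mem_edgeSet.mp (hsub h1))
      have hlt : H'.edgeSet.ncard < n := hn ▸ Set.ncard_lt_ncard hss (Set.toFinite _)
      obtain ⟨Gt, h1, h2, h3⟩ := ih _ hlt H' rfl hH'conn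
      exact ⟨Gt, h1.trans hle, h2, h3⟩

lemma tree_join' {V : Type*} [Fintype V] [DecidableEq V] {Gt : SimpleGraph V}
    (hc : Gt.Connected) (T : Finset V) (hT : Even T.card) :
    ∃ S : Finset (Sym2 V), ↑S ⊆ Gt.edgeSet ∧
      ∀ x : V, (((S.filter (fun e => x ∈ e)).card : ZMod 2)) = if x ∈ T then 1 else 0 := by
  classical
  suffices h : ∀ n (T : Finset V), T.card = n → Even T.card →
      ∃ S : Finset (Sym2 V), ↑S ⊆ Gt.edgeSet ∧
      ∀ x : V, (((S.filter (fun e => x ∈ e)).card : ZMod 2)) = if x ∈ T then 1 else 0 from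
    h _ T rfl hT
  intro n
  induction n using Nat.strong_induction_on with
  | _ n ih =>
    intro T hcard hTe
    rcases T.eq_empty_or_nonempty with rfl | ⟨u, hu⟩
    · exact ⟨∅, by simp, fun x => by simp⟩
    · have h1 : 1 ≤ T.card := Finset.card_pos.mpr ⟨u, hu⟩
      have h2 : 2 ≤ n := by
        rw [Nat.even_iff] at hTe; omega
      have hne : (T.erase u).Nonempty := by
        rw [← Finset.card_pos, Finset.card_erase_of_mem hu]; omega
      obtain ⟨v, hv⟩ := hne
      have hvu : v ≠ u := (Finset.mem_erase.mp hv).1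
      have hvT : v ∈ T := (Finset.mem_erase.mp hv).2
      set T'' := (T.erase u).erase v with hT''
      have hcard'' : T''.card = n - 2 := by
        rw [hT'', Finset.card_erase_of_mem hv, Finset.card_erase_of_mem hu, hcard]; omega
      have hTe'' : Even T''.card := by
        rw [Nat.even_iff] at hTe ⊢; rw [hcard'']; rw [hcard] at hTe; omega
      obtain ⟨S'', hS1, hS2⟩ := ih (n - 2) (by omega) T'' hcard'' hTe''
      set p : Gt.Path u v := (hc.preconnected u v).some.toPath with hpdef
      set P : Finset (Sym2 V) := (p : Gt.Walk u v).edges.toFinset with hP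
      have hPsub : (↑P : Set (Sym2 V)) ⊆ Gt.edgeSet := by
        intro e he
        simp only [hP, Finset.coe_insert, List.coe_toFinset, Set.mem_setOf_eq,
          List.mem_toFinset] at he
        exact (p : Gt.Walk u v).edges_subset_edgeSet (by simpa using he)
      refine ⟨P ∆ S'', ?_, ?_⟩
      · intro e he
        rcases Finset.mem_symmDiff.mp (Finset.mem_coe.mp he) with ⟨h, -⟩ | ⟨h, -⟩
        · exact hPsub h
        · exact hS1 h
      · intro x
        have hfilt : (P ∆ S'').filter (fun e => x ∈ e) =
            (P.filter (fun e => x ∈ e)) ∆ (S''.filter (fun e => x ∈ e)) := by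
          ext e
          simp only [Finset.mem_filter, Finset.mem_symmDiff]
          tauto
        rw [hfilt, cast_card_symmDiff']
        have hPfc : (P.filter (fun e => x ∈ e)).card =
            ((p : Gt.Walk u v).edges.filter (fun e => x ∈ e)).length := by
          have hnd : ((p : Gt.Walk u v).edges.filter (fun e => x ∈ e)).Nodup :=
            p.2.1.edges_nodup.filter _
          rw [← List.toFinset_card_of_nodup hnd]
          congr 1
          ext e
          simp [hP]
        rw [hPfc, walk_parity' (p : Gt.Walk u v) x, hS2 x]
        by_cases hxu : x = u
        · subst hxu
          have hxT'' : x ∉ T'' := by simp [hT'']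
          simp [hu, hxT'', Ne.symm hvu]
        · by_cases hxv : x = v
          · subst hxv
            have hxT'' : x ∉ T'' := by simp [hT'']
            simp [hvT, hxT'', hxu]
          · have : x ∈ T'' ↔ x ∈ T := by simp [hT'', hxu, hxv]
            by_cases hxT : x ∈ T <;> simp [hxu, hxv, hxT, this.mpr, hT''] <;>
              simp [Finset.mem_erase, hxu, hxv, hxT]

lemma sym2_filter_card {V : Type*} [Fintype V] [DecidableEq V] (e : Sym2 V)
    (hd : ¬ e.IsDiag) : (Finset.univ.filter (fun x => x ∈ e)).card = 2 := by
  induction e with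
  | _ a b =>
    have hab : a ≠ b := by simpa using hd
    have : Finset.univ.filter (fun x => x ∈ s(a, b)) = {a, b} := by
      ext x; simp [Sym2.mem_iff]
    rw [this, Finset.card_insert_of_notMem (by simp [hab]), Finset.card_singleton]

lemma even_odd_count' {V : Type*} [Fintype V] [DecidableEq V] (Nf : Finset (Sym2 V))
    (hnd : ∀ e ∈ Nf, ¬ e.IsDiag) :
    Even (Finset.univ.filter
      (fun x : V => Odd ((Nf.filter (fun e => x ∈ e)).card))).card := by
  classical
  rw [even_iff_zmod']
  have h1 : ((Finset.univ.filter
      (fun x : V => Odd ((Nf.filter (fun e => x ∈ e)).card))).card : ZMod 2)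
      = ∑ x : V, (((Nf.filter (fun e => x ∈ e)).card : ℕ) : ZMod 2) := by
    rw [Finset.card_filter]
    push_cast
    refine Finset.sum_congr rfl fun x _ => ?_
    by_cases h : Odd ((Nf.filter (fun e => x ∈ e)).card)
    · rw [if_pos h, (odd_iff_zmod' _).mp h]
    · rw [if_neg h, (even_iff_zmod' _).mp (Nat.not_odd_iff_even.mp h)]
  rw [h1]
  have h2 : ∑ x : V, (((Nf.filter (fun e => x ∈ e)).card : ℕ) : ZMod 2)
      = ((∑ x : V, (Nf.filter (fun e => x ∈ e)).card : ℕ) : ZMod 2) := by push_cast; rfl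
  rw [h2]
  have h3 : ∑ x : V, (Nf.filter (fun e => x ∈ e)).card = 2 * Nf.card := by
    have : ∀ x : V, (Nf.filter (fun e => x ∈ e)).card
        = ∑ e ∈ Nf, if x ∈ e then 1 else 0 := fun x => Finset.card_filter _ _
    simp_rw [this]
    rw [Finset.sum_comm]
    have : ∀ e ∈ Nf, (∑ x : V, if x ∈ e then 1 else 0) = 2 := by
      intro e he
      rw [← Finset.card_filter]
      exact sym2_filter_card e (hnd e he)
    rw [Finset.sum_congr rfl this, Finset.sum_const, smul_eq_mul, mul_comm]
  rw [h3]
  push_cast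
  have h4 : (2 : ZMod 2) = 0 := by decide
  rw [h4, zero_mul]

/-- In a connected graph `G`, for any even-sized `T ⊆ V(G)` there is a `T`-join that is
a forest, and also one that is a coforest (its edge-complement in `G` is acyclic). -/
theorem stmt_4 {V : Type*} [Fintype V] [DecidableEq V] (G : SimpleGraph V)
    (hG : G.Connected) (T : Finset V) (hT : Even T.card) :
    (∃ S : Set (Sym2 V), S ⊆ G.edgeSet ∧
      (∀ v : V, Odd {e | e ∈ S ∧ v ∈ e}.ncard ↔ v ∈ T) ∧
      (SimpleGraph.fromEdgeSet S).IsAcyclic) ∧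
    (∃ S : Set (Sym2 V), S ⊆ G.edgeSet ∧
      (∀ v : V, Odd {e | e ∈ S ∧ v ∈ e}.ncard ↔ v ∈ T) ∧
      (G.deleteEdges S).IsAcyclic) := by
  classical
  obtain ⟨Gt, hle, hconn, hacyc⟩ := exists_spanning_tree' G hG
  have hparity : ∀ (S0 : Finset (Sym2 V)) (v : V),
      {e | e ∈ (↑S0 : Set (Sym2 V)) ∧ v ∈ e}.ncard = (S0.filter (fun e => v ∈ e)).card := by
    intro S0 v
    have : {e | e ∈ (↑S0 : Set (Sym2 V)) ∧ v ∈ e} = ↑(S0.filter (fun e => v ∈ e)) := by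
      ext e; simp
    rw [this, Set.ncard_coe_finset]
  constructor
  · obtain ⟨S0, hS0sub, hS0par⟩ := tree_join' hconn T hT
    refine ⟨↑S0, hS0sub.trans (SimpleGraph.edgeSet_mono hle), fun v => ?_, ?_⟩
    · rw [hparity, odd_iff_zmod', hS0par v]
      by_cases h : v ∈ T <;> simp [h]
    · refine acyclic_mono' (G := Gt) ?_ hacyc
      intro a b hab
      rw [SimpleGraph.fromEdgeSet_adj] at hab
      exact Gt.mem_edgeSet.mp (hS0sub hab.1)
  · set Nf : Finset (Sym2 V) := (G.edgeSet \ Gt.edgeSet).toFinite.toFinset with hNf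
    have hNfmem : ∀ e, e ∈ Nf ↔ e ∈ G.edgeSet ∧ e ∉ Gt.edgeSet := by
      intro e; rw [hNf, Set.Finite.mem_toFinset, Set.mem_diff]
    have hNfnd : ∀ e ∈ Nf, ¬ e.IsDiag := fun e he =>
      SimpleGraph.not_isDiag_of_mem_edgeSet G ((hNfmem e).mp he).1
    set T'' : Finset V := Finset.univ.filter
      (fun x : V => Odd ((Nf.filter (fun e => x ∈ e)).card)) with hT''def
    have hT''even : Even T''.card := even_odd_count' Nf hNfnd
    have hTT : Even (T ∆ T'').card := by
      rw [even_iff_zmod', cast_card_symmDiff', (even_iff_zmod' _).mp hT,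
        (even_iff_zmod' _).mp hT''even, add_zero]
    obtain ⟨St, hStsub, hStpar⟩ := tree_join' hconn (T ∆ T'') hTT
    have hdisj : Disjoint St Nf := by
      rw [Finset.disjoint_left]
      intro e he hne
      exact ((hNfmem e).mp hne).2 (hStsub he)
    refine ⟨↑(St ∪ Nf), ?_, fun x => ?_, ?_⟩
    · intro e he
      rcases Finset.mem_union.mp (Finset.mem_coe.mp he) with h | h
      · exact SimpleGraph.edgeSet_mono hle (hStsub h)
      · exact ((hNfmem e).mp h).1
    · rw [hparity, odd_iff_zmod']
      have hfu : (St ∪ Nf).filter (fun e => x ∈ e)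
          = (St.filter (fun e => x ∈ e)) ∪ (Nf.filter (fun e => x ∈ e)) :=
        Finset.filter_union _ _ _
      rw [hfu, Finset.card_union_of_disjoint
        (Finset.disjoint_filter_filter hdisj)]
      push_cast
      rw [hStpar x]
      have hNterm : (((Nf.filter (fun e => x ∈ e)).card : ℕ) : ZMod 2)
          = if x ∈ T'' then 1 else 0 := by
        by_cases h : x ∈ T''
        · rw [if_pos h]
          exact (odd_iff_zmod' _).mp (by simpa [hT''def] using h)
        · rw [if_neg h]
          refine (even_iff_zmod' _).mp (Nat.not_odd_iff_even.mp ?_)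
          simpa [hT''def] using h
      rw [hNterm]
      by_cases h1 : x ∈ T <;> by_cases h2 : x ∈ T'' <;>
        simp [Finset.mem_symmDiff, h1, h2] <;> decide
    · refine acyclic_mono' (G := Gt) ?_ hacyc
      intro a b hab
      rw [SimpleGraph.deleteEdges_adj] at hab
      obtain ⟨hGab, hnot⟩ := hab
      by_contra hGt
      have : s(a, b) ∈ Nf := (hNfmem _).mpr ⟨G.mem_edgeSet.mpr hGab, fun hc => hGt (Gt.mem_edgeSet.mp hc)⟩
      exact hnot (Finset.mem_coe.mpr (Finset.mem_union_right _ this))
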